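/- Let σ be a Hanabi deck over n values with a single color (c = 1) and let h be a hand size. Let σ* be any sequence obtained from σ by repeatedly deleting a card that is useless (for hand size h) in the current sequence, until no useless card remains. Then σ has a winning play sequence with hand size h if and only if σ* contains at least one card of each value 1,…,n. -/

import Mathlib

/-- A card is a pair (value, color). -/
abbrev Card : Type := ℕ × ℕ

/-- The card at (0-indexed) position `i` of deck `σ` (junk `(0,0)` when out of range). -/
def nth (σ : List Card) (i : ℕ) : Card := σ.getD i (0, 0)

/-- A configuration: for each color, the highest value played so far in that color
(values `1,…,played k` of color `k` count as played), the hand (the set of positions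
of the cards currently stored), and the set of positions of the cards played so far. -/
structure Config where
  played : ℕ → ℕ
  hand : Finset ℕ
  done : Finset ℕ

/-- `PlayFromHand σ cfg cfg'`: starting from `cfg`, play zero or more cards stored
in the hand (each playable card increments the progress of its color). -/
inductive PlayFromHand (σ : List Card) : Config → Config → Prop
  | refl (cfg : Config) : PlayFromHand σ cfg cfg
  | play (cfg cfg' : Config) (j : ℕ) (hj : j ∈ cfg.hand)
      (hplay : cfg.played (nth σ j).2 + 1 = (nth σ j).1)
      (htail : PlayFromHand σ
        ⟨Function.update cfg.played (nth σ j).2 (nth σ j).1,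
          cfg.hand.erase j, insert j cfg.done⟩ cfg') :
      PlayFromHand σ cfg cfg'

/-- `Step σ h i cfg cfg'`: processing the drawn card at position `i` with hand size `h`,
the player either discards it, stores it (the hand may never exceed `h` cards), or plays
it immediately (followed by playing any number of stored cards). -/
inductive Step (σ : List Card) (h : ℕ) (i : ℕ) : Config → Config → Prop
  | discard (cfg : Config) : Step σ h i cfg cfg
  | store (cfg : Config) (hsize : (insert i cfg.hand).card ≤ h) :
      Step σ h i cfg ⟨cfg.played, insert i cfg.hand, cfg.done⟩
  | playNow (cfg cfg' : Config)
      (hplay : cfg.played (nth σ i).2 + 1 = (nth σ i).1)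
      (htail : PlayFromHand σ
        ⟨Function.update cfg.played (nth σ i).2 (nth σ i).1,
          cfg.hand, insert i cfg.done⟩ cfg') :
      Step σ h i cfg cfg'

/-- The initial configuration: nothing played, empty hand. -/
def Config.initial : Config := ⟨fun _ => 0, ∅, ∅⟩

/-- A play sequence with hand size `h` on deck `σ`, starting from configuration `start`:
a sequence of configurations where the `i`-th step processes the card at position `i`. -/
structure PlaySeq (σ : List Card) (h : ℕ) (start : Config) where
  cfgs : ℕ → Config
  init : cfgs 0 = start
  step : ∀ i < σ.length, Step σ h i (cfgs i) (cfgs (i + 1))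

/-- The final configuration of a play sequence. -/
def PlaySeq.final {σ : List Card} {h : ℕ} {start : Config} (ps : PlaySeq σ h start) :
    Config := ps.cfgs σ.length

/-- A winning play sequence: for every color `k ∈ {1,…,c}`, all values `1,…,n` are played. -/
def PlaySeq.Winning {σ : List Card} {h : ℕ} {start : Config} (ps : PlaySeq σ h start)
    (n c : ℕ) : Prop :=
  ∀ k, 1 ≤ k → k ≤ c → n ≤ ps.final.played k

/-- `σ` is a deck over `n` values and `c` colors. -/
def ValidDeck (σ : List Card) (n c : ℕ) : Prop :=
  ∀ cd ∈ σ, 1 ≤ cd.1 ∧ cd.1 ≤ n ∧ 1 ≤ cd.2 ∧ cd.2 ≤ c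

/-- The `i`-th card of a single-color deck `σ` is *useless* for hand size `h` (over `n`
values) if there are `h+1` values `w_1 < ⋯ < w_{h+1}`, all larger than the value of the
`i`-th card and at most `n`, such that no card with value among them appears after
position `i` in `σ`. -/
def Useless (σ : List Card) (h n i : ℕ) : Prop :=
  ∃ W : Finset ℕ, W.card = h + 1 ∧
    (∀ x ∈ W, (nth σ i).1 < x ∧ x ≤ n) ∧
    (∀ j, i < j → j < σ.length → (nth σ j).1 ∉ W)

/-- One filtering step: delete one card that is useless in the current sequence. -/
def DeleteUselessStep (h n : ℕ) (σ τ : List Card) : Prop :=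
  ∃ i < σ.length, Useless σ h n i ∧ τ = σ.eraseIdx i

attribute [local instance] Classical.propDecidable

namespace HanabiAux

/-! ### Basic facts about `nth` -/

lemma nth_lt {σ : List Card} {j : ℕ} (h : j < σ.length) : nth σ j = σ[j] :=
  List.getD_eq_getElem σ _ h

lemma nth_ge {σ : List Card} {j : ℕ} (h : σ.length ≤ j) : nth σ j = (0, 0) :=
  List.getD_eq_default σ _ h

lemma nth_mem {σ : List Card} {j : ℕ} (h : j < σ.length) : nth σ j ∈ σ := by
  rw [nth_lt h]; exact List.getElem_mem h

lemma lt_length_of_val_pos {σ : List Card} {j : ℕ} (h : 0 < (nth σ j).1) : j < σ.length := by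
  by_contra hc
  rw [nth_ge (le_of_not_gt hc)] at h
  exact absurd h (by norm_num)

lemma color_one {σ : List Card} {n : ℕ} (hval : ValidDeck σ n 1) {j : ℕ}
    (h : j < σ.length) : (nth σ j).2 = 1 := by
  have := hval _ (nth_mem h); omega

lemma val_le {σ : List Card} {n : ℕ} (hval : ValidDeck σ n 1) {j : ℕ}
    (h : j < σ.length) : 1 ≤ (nth σ j).1 ∧ (nth σ j).1 ≤ n := by
  have := hval _ (nth_mem h); omega

/-- position played in `hplay` is in range -/
lemma play_lt_length {σ : List Card} {c : Config} {j : ℕ}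
    (hplay : c.played (nth σ j).2 + 1 = (nth σ j).1) : j < σ.length :=
  lt_length_of_val_pos (by omega)

lemma nth_eraseIdx {σ : List Card} {d : ℕ} (hd : d < σ.length) (j : ℕ) :
    nth (σ.eraseIdx d) j = nth σ (if j < d then j else j + 1) := by
  have hlen : (σ.eraseIdx d).length = σ.length - 1 := by
    rw [List.length_eraseIdx]; simp [hd]
  by_cases hj : j < (σ.eraseIdx d).length
  · rw [nth_lt hj, List.getElem_eraseIdx]
    split
    · exact (nth_lt (by omega)).symm
    · exact (nth_lt (by omega)).symm
  · have hj' : σ.length - 1 ≤ j := by omega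
    rw [nth_ge (le_of_not_gt hj)]
    have : ¬ j < d := by omega
    rw [if_neg this, nth_ge (by omega)]

/-! ### Monotonicity of `done` -/

lemma pfh_done_mono {σ : List Card} {c c' : Config}
    (hp : PlayFromHand σ c c') : c.done ⊆ c'.done := by
  induction hp with
  | refl => exact subset_rfl
  | play cfg cfg' j hj hplay htail ih =>
      exact (Finset.subset_insert _ _).trans ih

lemma step_done_mono {σ : List Card} {h i : ℕ} {c c' : Config}
    (hs : Step σ h i c c') : c.done ⊆ c'.done := by
  cases hs with
  | discard => exact subset_rfl
  | store => exact subset_rfl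
  | playNow _ hplay htail => exact (Finset.subset_insert _ _).trans (pfh_done_mono htail)

/-! ### Generic invariant machinery for play sequences -/

lemma playseq_ind {σ : List Card} {h : ℕ} {st : Config} (ps : PlaySeq σ h st)
    (P : ℕ → Config → Prop) (h0 : P 0 st)
    (hstep : ∀ i < σ.length, ∀ c c', Step σ h i c c' → P i c → P (i + 1) c') :
    ∀ i ≤ σ.length, P i (ps.cfgs i) := by
  intro i
  induction i with
  | zero => intro _; rw [ps.init]; exact h0
  | succ k ih =>
      intro hk
      exact hstep k (by omega) _ _ (ps.step k (by omega)) (ih (by omega))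

lemma playseq_done_mono {σ : List Card} {h : ℕ} {st : Config} (ps : PlaySeq σ h st) :
    ∀ j ≤ σ.length, ∀ i ≤ j, (ps.cfgs i).done ⊆ (ps.cfgs j).done := by
  intro j
  induction j with
  | zero => intro _ i hi; have : i = 0 := by omega
            subst this; exact subset_rfl
  | succ k ih =>
      intro hk i hi
      rcases Nat.eq_or_lt_of_le hi with rfl | hlt
      · exact subset_rfl
      · exact (ih (by omega) i (by omega)).trans (step_done_mono (ps.step k (by omega)))

/-! ### Values played must occur in the deck -/

def ValIn (σ : List Card) (c : Config) : Prop :=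
  ∀ a, 1 ≤ a → a ≤ c.played 1 → (a, 1) ∈ σ

lemma ValIn.play {σ : List Card} {c : Config} {j : ℕ}
    (hplay : c.played (nth σ j).2 + 1 = (nth σ j).1) (hv : ValIn σ c) {H D : Finset ℕ} :
    ValIn σ ⟨Function.update c.played (nth σ j).2 (nth σ j).1, H, D⟩ := by
  intro a h1 h2
  by_cases hcol : (nth σ j).2 = 1
  · rw [hcol] at h2
    simp only [Function.update_self] at h2
    rcases Nat.eq_or_lt_of_le h2 with rfl | hlt
    · have hj : j < σ.length := play_lt_length hplay
      have : nth σ j = ((nth σ j).1, 1) := by rw [← hcol]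
      exact this ▸ nth_mem hj
    · exact hv a h1 (by rw [hcol] at hplay; omega)
  · replace h2 : a ≤ Function.update c.played (nth σ j).2 (nth σ j).1 1 := h2
    rw [Function.update_of_ne (fun hc => hcol hc.symm)] at h2
    exact hv a h1 h2

/-! ### Adding a deleted card back preserves winnability -/

def eIdx (d j : ℕ) : ℕ := if j < d then j else j + 1

lemma eIdx_inj (d : ℕ) : Function.Injective (eIdx d) := by
  intro x y hxy; unfold eIdx at hxy; split at hxy <;> split at hxy <;> omega

def mapC (d : ℕ) (c : Config) : Config :=
  ⟨c.played, c.hand.image (eIdx d), c.done.image (eIdx d)⟩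

lemma nth_eraseIdx' {σ : List Card} {d : ℕ} (hd : d < σ.length) (j : ℕ) :
    nth (σ.eraseIdx d) j = nth σ (eIdx d j) := nth_eraseIdx hd j

lemma pfh_lift {σ : List Card} {d : ℕ} (hd : d < σ.length) {c c' : Config}
    (hp : PlayFromHand (σ.eraseIdx d) c c') :
    PlayFromHand σ (mapC d c) (mapC d c') := by
  induction hp with
  | refl => exact PlayFromHand.refl _
  | play cfg cfg' j hj hplay htail ih =>
      refine PlayFromHand.play _ _ (eIdx d j) (Finset.mem_image_of_mem _ hj) ?_ ?_
      · rw [← nth_eraseIdx' hd]; exact hplay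
      · have hcfg : (⟨Function.update (mapC d cfg).played (nth σ (eIdx d j)).2 (nth σ (eIdx d j)).1,
            (mapC d cfg).hand.erase (eIdx d j), insert (eIdx d j) (mapC d cfg).done⟩ : Config) =
            mapC d ⟨Function.update cfg.played (nth (σ.eraseIdx d) j).2 (nth (σ.eraseIdx d) j).1,
              cfg.hand.erase j, insert j cfg.done⟩ := by
          rw [nth_eraseIdx' hd]
          unfold mapC
          simp only [Finset.image_insert, Finset.image_erase (eIdx_inj d)]
        rw [hcfg]; exact ih

lemma step_lift {σ : List Card} {d h i : ℕ} (hd : d < σ.length) {c c' : Config}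
    (hs : Step (σ.eraseIdx d) h i c c') :
    Step σ h (eIdx d i) (mapC d c) (mapC d c') := by
  cases hs with
  | discard => exact Step.discard _
  | store hsize =>
      have h1 : (insert (eIdx d i) (mapC d c).hand) = (insert i c.hand).image (eIdx d) := by
        unfold mapC; simp [Finset.image_insert]
      have h2 : (insert (eIdx d i) (mapC d c).hand).card ≤ h := by
        rw [h1, Finset.card_image_of_injective _ (eIdx_inj d)]; exact hsize
      have hst := Step.store (σ := σ) (h := h) (i := eIdx d i) (mapC d c) h2
      have hcfg : (⟨(mapC d c).played, insert (eIdx d i) (mapC d c).hand, (mapC d c).done⟩ : Config)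
          = mapC d ⟨c.played, insert i c.hand, c.done⟩ := by
        unfold mapC; simp [Finset.image_insert]
      rwa [hcfg] at hst
  | playNow cfg' hplay htail =>
      refine Step.playNow _ _ ?_ ?_
      · rw [← nth_eraseIdx' hd]; exact hplay
      · have hcfg : (⟨Function.update (mapC d c).played (nth σ (eIdx d i)).2 (nth σ (eIdx d i)).1,
            (mapC d c).hand, insert (eIdx d i) (mapC d c).done⟩ : Config) =
            mapC d ⟨Function.update c.played (nth (σ.eraseIdx d) i).2 (nth (σ.eraseIdx d) i).1,
              c.hand, insert i c.done⟩ := by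
          rw [nth_eraseIdx' hd]
          unfold mapC
          simp only [Finset.image_insert]
        rw [hcfg]; exact pfh_lift hd htail

lemma mapC_initial (d : ℕ) : mapC d Config.initial = Config.initial := by
  unfold mapC Config.initial; simp

lemma winnable_lift {σ : List Card} {n h d : ℕ} (hd : d < σ.length)
    (hwin : ∃ ps : PlaySeq (σ.eraseIdx d) h Config.initial, ps.Winning n 1) :
    ∃ ps : PlaySeq σ h Config.initial, ps.Winning n 1 := by
  obtain ⟨ps, hw⟩ := hwin
  have hlen : (σ.eraseIdx d).length = σ.length - 1 := by
    rw [List.length_eraseIdx]; simp [hd]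
  refine ⟨⟨fun i => mapC d (ps.cfgs (if i ≤ d then i else i - 1)), ?_, ?_⟩, ?_⟩
  · simp [ps.init, mapC_initial]
  · intro i hi
    rcases lt_trichotomy i d with hlt | rfl | hgt
    · rw [if_pos (by omega : i ≤ d), if_pos (by omega : i + 1 ≤ d)]
      have := step_lift hd (ps.step i (by omega))
      rwa [show eIdx d i = i from if_pos hlt] at this
    · rw [if_pos (le_refl i), if_neg (by omega : ¬ i + 1 ≤ i),
        show i + 1 - 1 = i from by omega]
      exact Step.discard _
    · rw [if_neg (by omega : ¬ i ≤ d), if_neg (by omega : ¬ i + 1 ≤ d),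
        show i + 1 - 1 = i from by omega]
      have := step_lift hd (ps.step (i - 1) (by omega))
      rw [show eIdx d (i - 1) = i from by unfold eIdx; rw [if_neg (by omega)]; omega,
        show i - 1 + 1 = i from by omega] at this
      exact this
  · intro k hk1 hk2
    have hfin := hw k hk1 hk2
    unfold PlaySeq.final at hfin ⊢
    simp only
    rw [if_neg (by omega : ¬ σ.length ≤ d), show σ.length - 1 = (σ.eraseIdx d).length from hlen.symm]
    exact hfin

/-! ### Dropping a never-played card -/

def rIdx (d j : ℕ) : ℕ := if j < d then j else j - 1

def mapD (d : ℕ) (S : Finset ℕ) : Finset ℕ := (S.erase d).image (rIdx d)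

def mapDC (d : ℕ) (c : Config) : Config := ⟨c.played, mapD d c.hand, mapD d c.done⟩

lemma rIdx_injOn {d x y : ℕ} (hx : x ≠ d) (hy : y ≠ d) (hxy : rIdx d x = rIdx d y) : x = y := by
  unfold rIdx at hxy; split at hxy <;> split at hxy <;> omega

lemma eIdx_rIdx {d j : ℕ} (hj : j ≠ d) : eIdx d (rIdx d j) = j := by
  unfold rIdx eIdx
  by_cases hc : j < d
  · simp [hc]
  · rw [if_neg hc, if_neg (by omega)]; omega

lemma nth_rIdx {σ : List Card} {d : ℕ} (hd : d < σ.length) {j : ℕ} (hj : j ≠ d) :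
    nth (σ.eraseIdx d) (rIdx d j) = nth σ j := by
  rw [nth_eraseIdx' hd, eIdx_rIdx hj]

lemma mapD_insert {d j : ℕ} (hj : j ≠ d) (S : Finset ℕ) :
    mapD d (insert j S) = insert (rIdx d j) (mapD d S) := by
  unfold mapD
  rw [Finset.erase_insert_of_ne hj, Finset.image_insert]

lemma mapD_erase {d j : ℕ} (hj : j ≠ d) (S : Finset ℕ) :
    mapD d (S.erase j) = (mapD d S).erase (rIdx d j) := by
  unfold mapD
  ext x
  simp only [Finset.mem_image, Finset.mem_erase]
  constructor
  · rintro ⟨y, ⟨hyd, hyj, hyS⟩, rfl⟩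
    exact ⟨fun hc => hyj (rIdx_injOn hyd hj hc), y, ⟨hyd, hyS⟩, rfl⟩
  · rintro ⟨hx, y, ⟨hyd, hyS⟩, rfl⟩
    exact ⟨y, ⟨hyd, fun hc => hx (by rw [hc]), hyS⟩, rfl⟩

lemma mapD_mem {d j : ℕ} (hj : j ≠ d) {S : Finset ℕ} (hjS : j ∈ S) :
    rIdx d j ∈ mapD d S :=
  Finset.mem_image_of_mem _ (Finset.mem_erase.2 ⟨hj, hjS⟩)

lemma mapD_card_le (d : ℕ) (S : Finset ℕ) : (mapD d S).card ≤ S.card :=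
  le_trans (Finset.card_image_le) (Finset.card_erase_le)

lemma pfh_drop {σ : List Card} {d : ℕ} (hd : d < σ.length) {c c' : Config}
    (hp : PlayFromHand σ c c') (hdone : d ∉ c'.done) :
    PlayFromHand (σ.eraseIdx d) (mapDC d c) (mapDC d c') := by
  induction hp with
  | refl => exact PlayFromHand.refl _
  | play cfg cfg' j hj hplay htail ih =>
      have hjd : j ≠ d := by
        rintro rfl
        exact hdone (pfh_done_mono htail (Finset.mem_insert_self _ _))
      refine PlayFromHand.play _ _ (rIdx d j) (mapD_mem hjd hj) ?_ ?_
      · rw [nth_rIdx hd hjd]; exact hplay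
      · have hcfg : (⟨Function.update (mapDC d cfg).played (nth (σ.eraseIdx d) (rIdx d j)).2
              (nth (σ.eraseIdx d) (rIdx d j)).1,
            (mapDC d cfg).hand.erase (rIdx d j), insert (rIdx d j) (mapDC d cfg).done⟩ : Config) =
            mapDC d ⟨Function.update cfg.played (nth σ j).2 (nth σ j).1,
              cfg.hand.erase j, insert j cfg.done⟩ := by
          rw [nth_rIdx hd hjd]
          unfold mapDC
          simp only [mapD_insert hjd, mapD_erase hjd]
        rw [hcfg]; exact ih hdone

lemma step_drop {σ : List Card} {d h i : ℕ} (hd : d < σ.length) (hid : i ≠ d) {c c' : Config}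
    (hs : Step σ h i c c') (hdone : d ∉ c'.done) :
    Step (σ.eraseIdx d) h (rIdx d i) (mapDC d c) (mapDC d c') := by
  cases hs with
  | discard => exact Step.discard _
  | store hsize =>
      have h2 : (insert (rIdx d i) (mapDC d c).hand).card ≤ h := by
        have : insert (rIdx d i) (mapDC d c).hand = mapD d (insert i c.hand) := by
          rw [mapD_insert hid]; rfl
        rw [this]
        exact le_trans (mapD_card_le _ _) hsize
      have hst := Step.store (σ := σ.eraseIdx d) (h := h) (i := rIdx d i) (mapDC d c) h2
      have hcfg : (⟨(mapDC d c).played, insert (rIdx d i) (mapDC d c).hand, (mapDC d c).done⟩ : Config)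
          = mapDC d ⟨c.played, insert i c.hand, c.done⟩ := by
        unfold mapDC; simp only [mapD_insert hid]
      rwa [hcfg] at hst
  | playNow cfg' hplay htail =>
      refine Step.playNow _ _ ?_ ?_
      · rw [nth_rIdx hd hid]; exact hplay
      · have hcfg : (⟨Function.update (mapDC d c).played (nth (σ.eraseIdx d) (rIdx d i)).2
              (nth (σ.eraseIdx d) (rIdx d i)).1,
            (mapDC d c).hand, insert (rIdx d i) (mapDC d c).done⟩ : Config) =
            mapDC d ⟨Function.update c.played (nth σ i).2 (nth σ i).1,
              c.hand, insert i c.done⟩ := by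
          rw [nth_rIdx hd hid]
          unfold mapDC
          simp only [mapD_insert hid]
        rw [hcfg]; exact pfh_drop hd htail hdone

lemma step_at_d {σ : List Card} {d h : ℕ} {c c' : Config}
    (hs : Step σ h d c c') (hdone : d ∉ c'.done) : mapDC d c' = mapDC d c := by
  cases hs with
  | discard => rfl
  | store hsize =>
      unfold mapDC mapD
      simp only [Finset.erase_insert_eq_erase]
  | playNow cfg' hplay htail =>
      exact absurd (pfh_done_mono htail (Finset.mem_insert_self _ _)) hdone

lemma mapDC_initial (d : ℕ) : mapDC d Config.initial = Config.initial := by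
  unfold mapDC mapD Config.initial; simp

lemma step_played_eq {σ : List Card} {d h : ℕ} {c c' : Config}
    (hs : Step σ h d c c') (hdone : d ∉ c'.done) : c'.played = c.played := by
  cases hs with
  | discard => rfl
  | store hsize => rfl
  | playNow cfg' hplay htail =>
      exact absurd (pfh_done_mono htail (Finset.mem_insert_self _ _)) hdone

/-! ### A useless card is never played in a winning sequence -/

def Kinv (σ : List Card) (W : Finset ℕ) (c : Config) : Prop :=
  ∃ w ∈ W, c.played 1 < w ∧ ∀ j ∈ c.hand, (nth σ j).1 ≠ w

def Pinv (σ : List Card) (h d : ℕ) (W : Finset ℕ) (b : ℕ) (c : Config) : Prop :=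
  c.hand.card ≤ h ∧ (∀ j ∈ c.hand, j < b) ∧ (d ∈ c.done → d < b ∧ Kinv σ W c)

/-- pick a value of `W` avoided by the (≤ h)-card hand -/
lemma exists_avoid {σ : List Card} {h : ℕ} {W : Finset ℕ} (hW : W.card = h + 1)
    {H : Finset ℕ} (hH : H.card ≤ h) :
    ∃ w ∈ W, ∀ j ∈ H, (nth σ j).1 ≠ w := by
  have hcard : (H.image (fun j => (nth σ j).1)).card < W.card := by
    calc (H.image (fun j => (nth σ j).1)).card ≤ H.card := Finset.card_image_le
    _ < W.card := by omega
  have hns : ¬ W ⊆ H.image (fun j => (nth σ j).1) :=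
    fun hsub => absurd (Finset.card_le_card hsub) (by omega)
  obtain ⟨w, hwW, hwn⟩ := Finset.not_subset.1 hns
  exact ⟨w, hwW, fun j hj hc => hwn (Finset.mem_image.2 ⟨j, hj, hc⟩)⟩

section KinvSec

variable {σ : List Card} {n h d : ℕ} {W : Finset ℕ}
  (hval : ValidDeck σ n 1) (hd : d < σ.length)
  (hWcard : W.card = h + 1)
  (hWval : ∀ x ∈ W, (nth σ d).1 < x ∧ x ≤ n)
  (hWafter : ∀ j, d < j → j < σ.length → (nth σ j).1 ∉ W)

include hval hd hWcard hWval hWafter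

lemma pfh_P {c c' : Config} (hp : PlayFromHand σ c c') (b : ℕ)
    (hP : Pinv σ h d W b c) : Pinv σ h d W b c' := by
  induction hp with
  | refl => exact hP
  | play cfg cfg' j hj hplay htail ih =>
      obtain ⟨hcard, hpos, hK⟩ := hP
      have hjlen : j < σ.length := play_lt_length hplay
      have hcol : (nth σ j).2 = 1 := color_one hval hjlen
      refine ih ⟨le_trans Finset.card_erase_le hcard,
        fun x hx => hpos x (Finset.mem_of_mem_erase hx), ?_⟩
      intro hdin
      simp only [Finset.mem_insert] at hdin
      rcases hdin with rfl | hdin'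
      · -- the useless card is being played right now: establish Kinv
        refine ⟨hpos d hj, ?_⟩
        obtain ⟨w, hwW, hwavoid⟩ := exists_avoid (σ := σ) hWcard
          (le_trans Finset.card_erase_le hcard)
        refine ⟨w, hwW, ?_, hwavoid⟩
        show Function.update cfg.played (nth σ d).2 (nth σ d).1 1 < w
        rw [hcol, Function.update_self]
        exact (hWval w hwW).1
      · obtain ⟨hdb, w, hwW, hwlt, hwhand⟩ := hK hdin'
        refine ⟨hdb, w, hwW, ?_, fun x hx => hwhand x (Finset.mem_of_mem_erase hx)⟩
        show Function.update cfg.played (nth σ j).2 (nth σ j).1 1 < w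
        rw [hcol, Function.update_self]
        rw [hcol] at hplay
        have : (nth σ j).1 ≠ w := hwhand j hj
        omega

lemma step_P {c c' : Config} {i : ℕ} (hi : i < σ.length)
    (hs : Step σ h i c c') (hP : Pinv σ h d W i c) : Pinv σ h d W (i + 1) c' := by
  obtain ⟨hcard, hpos, hK⟩ := hP
  cases hs with
  | discard =>
      exact ⟨hcard, fun x hx => lt_trans (hpos x hx) (by omega), fun hdin =>
        ⟨by have := (hK hdin).1; omega, (hK hdin).2⟩⟩
  | store hsize =>
      refine ⟨hsize, ?_, ?_⟩
      · intro x hx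
        rcases Finset.mem_insert.1 hx with rfl | hx' <;> [omega; exact lt_trans (hpos x hx') (by omega)]
      · intro hdin
        obtain ⟨hdb, w, hwW, hwlt, hwhand⟩ := hK hdin
        refine ⟨by omega, w, hwW, hwlt, ?_⟩
        intro x hx
        rcases Finset.mem_insert.1 hx with rfl | hx'
        · intro hc
          exact hWafter x hdb hi (hc ▸ hwW)
        · exact hwhand x hx'
  | playNow cfg' hplay htail =>
      refine pfh_P hval hd hWcard hWval hWafter htail (i + 1) ?_
      have hcol : (nth σ i).2 = 1 := color_one hval hi
      refine ⟨hcard, fun x hx => lt_trans (hpos x hx) (by omega), ?_⟩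
      intro hdin
      simp only [Finset.mem_insert] at hdin
      rcases hdin with rfl | hdin'
      · refine ⟨by omega, ?_⟩
        obtain ⟨w, hwW, hwavoid⟩ := exists_avoid (σ := σ) hWcard hcard
        refine ⟨w, hwW, ?_, hwavoid⟩
        show Function.update c.played (nth σ d).2 (nth σ d).1 1 < w
        rw [hcol, Function.update_self]
        exact (hWval w hwW).1
      · obtain ⟨hdb, w, hwW, hwlt, hwhand⟩ := hK hdin'
        refine ⟨by omega, w, hwW, ?_, hwhand⟩
        show Function.update c.played (nth σ i).2 (nth σ i).1 1 < w
        rw [hcol, Function.update_self]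
        rw [hcol] at hplay
        have : (nth σ i).1 ≠ w := fun hc => hWafter i hdb hi (hc ▸ hwW)
        omega

lemma useless_not_done {st : Config} (ps : PlaySeq σ h st)
    (hst : Pinv σ h d W 0 st) (hw : ps.Winning n 1) :
    ∀ i ≤ σ.length, d ∉ (ps.cfgs i).done := by
  have hall : ∀ i ≤ σ.length, Pinv σ h d W i (ps.cfgs i) :=
    playseq_ind ps _ hst (fun i hi c c' hs hP => step_P hval hd hWcard hWval hWafter hi hs hP)
  have hfin : d ∉ ps.final.done := by
    intro hdin
    obtain ⟨_, w, hwW, hwlt, _⟩ := (hall σ.length le_rfl).2.2 hdin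
    have hw1 := hw 1 le_rfl le_rfl
    have hw2 := (hWval w hwW).2
    unfold PlaySeq.final at hw1
    omega
  intro i hi hdin
  exact hfin (playseq_done_mono ps σ.length le_rfl i hi hdin)

end KinvSec

lemma winnable_drop {σ : List Card} {n h d : ℕ} (hval : ValidDeck σ n 1)
    (hd : d < σ.length) (hu : Useless σ h n d)
    (hwin : ∃ ps : PlaySeq σ h Config.initial, ps.Winning n 1) :
    ∃ ps : PlaySeq (σ.eraseIdx d) h Config.initial, ps.Winning n 1 := by
  obtain ⟨ps, hw⟩ := hwin
  obtain ⟨W, hWcard, hWval, hWafter⟩ := hu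
  have hst : Pinv σ h d W 0 Config.initial := by
    refine ⟨by simp [Config.initial], by simp [Config.initial], by simp [Config.initial]⟩
  have hnd := useless_not_done hval hd hWcard hWval hWafter ps hst hw
  have hlen : (σ.eraseIdx d).length = σ.length - 1 := by
    rw [List.length_eraseIdx]; simp [hd]
  refine ⟨⟨fun i => mapDC d (ps.cfgs (if i ≤ d then i else i + 1)), ?_, ?_⟩, ?_⟩
  · simp [ps.init, mapDC_initial]
  · intro i hi
    rcases lt_trichotomy i d with hlt | rfl | hgt
    · rw [if_pos (by omega : i ≤ d), if_pos (by omega : i + 1 ≤ d)]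
      have := step_drop hd (by omega) (ps.step i (by omega)) (hnd (i+1) (by omega))
      rwa [show rIdx d i = i from if_pos hlt] at this
    · rw [if_pos le_rfl, if_neg (by omega : ¬ i + 1 ≤ i)]
      have heq : mapDC i (ps.cfgs i) = mapDC i (ps.cfgs (i + 1)) :=
        (step_at_d (ps.step i (by omega)) (hnd (i+1) (by omega))).symm
      rw [heq]
      have := step_drop hd (by omega : i + 1 ≠ i) (ps.step (i + 1) (by omega))
        (hnd (i+2) (by omega))
      rwa [show rIdx i (i + 1) = i from by unfold rIdx; rw [if_neg (by omega)]; omega] at this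
    · rw [if_neg (by omega : ¬ i ≤ d), if_neg (by omega : ¬ i + 1 ≤ d)]
      have := step_drop hd (by omega : i + 1 ≠ d) (ps.step (i + 1) (by omega))
        (hnd (i+2) (by omega))
      rwa [show rIdx d (i + 1) = i from by unfold rIdx; rw [if_neg (by omega)]; omega] at this
  · intro k hk1 hk2
    have hfin := hw k hk1 hk2
    unfold PlaySeq.final at hfin ⊢
    simp only
    by_cases hcase : (σ.eraseIdx d).length ≤ d
    · have hdeq : d = σ.length - 1 := by omega
      rw [if_pos hcase]
      have h1 : (σ.eraseIdx d).length = d := by omega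
      rw [h1]
      have : (mapDC d (ps.cfgs d)).played = (ps.cfgs d).played := rfl
      rw [this]
      have hpe : (ps.cfgs (d + 1)).played = (ps.cfgs d).played :=
        step_played_eq (ps.step d hd) (hnd (d+1) (by omega))
      have hde : d + 1 = σ.length := by omega
      rw [hde] at hpe
      rw [← hpe]
      exact hfin
    · rw [if_neg hcase]
      have : (σ.eraseIdx d).length + 1 = σ.length := by omega
      rw [this]
      exact hfin

/-! ### The greedy strategy -/

def fut (τ : List Card) (a i : ℕ) : Prop :=
  ∃ j, i ≤ j ∧ j < τ.length ∧ (nth τ j).1 = a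

def lastc (τ : List Card) (j : ℕ) : Prop := ¬ fut τ ((nth τ j).1) (j + 1)

lemma lastc_unique {τ : List Card} {j1 j2 : ℕ} (hv : (nth τ j1).1 = (nth τ j2).1)
    (h1 : lastc τ j1) (h2 : lastc τ j2) (hl1 : j1 < τ.length) (hl2 : j2 < τ.length) :
    j1 = j2 := by
  rcases lt_trichotomy j1 j2 with hc | hc | hc
  · exact absurd ⟨j2, by omega, hl2, hv.symm⟩ h1
  · exact hc
  · exact absurd ⟨j1, by omega, hl1, hv⟩ h2

noncomputable def extq (τ : List Card) (n i a : ℕ) : ℕ :=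
  a + Nat.find (⟨n, Or.inl (by omega)⟩ : ∃ k, n < a + k + 1 ∨ fut τ (a + k + 1) i)

lemma extq_ge (τ : List Card) (n i a : ℕ) : a ≤ extq τ n i a := Nat.le_add_right _ _

lemma extq_le {τ : List Card} {n a : ℕ} (i : ℕ) (ha : a ≤ n) : extq τ n i a ≤ n := by
  have := Nat.find_le (n := n - a)
    (h := (⟨n, Or.inl (by omega)⟩ : ∃ k, n < a + k + 1 ∨ fut τ (a + k + 1) i))
    (Or.inl (by omega))
  unfold extq; omega

lemma extq_avoid {τ : List Card} {n i a w : ℕ} (hw1 : a < w) (hw2 : w ≤ extq τ n i a) :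
    ¬ fut τ w i ∧ w ≤ n := by
  have hmin := Nat.find_min
    (⟨n, Or.inl (by omega)⟩ : ∃ k, n < a + k + 1 ∨ fut τ (a + k + 1) i)
    (m := w - a - 1) (by unfold extq at hw2; omega)
  rw [show a + (w - a - 1) + 1 = w from by omega] at hmin
  push_neg at hmin
  exact ⟨hmin.2, by omega⟩

lemma extq_spec (τ : List Card) (n i a : ℕ) :
    n < extq τ n i a + 1 ∨ fut τ (extq τ n i a + 1) i := by
  have := Nat.find_spec (⟨n, Or.inl (by omega)⟩ : ∃ k, n < a + k + 1 ∨ fut τ (a + k + 1) i)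
  unfold extq
  rwa [show a + Nat.find _ + 1 = a + (Nat.find _) + 1 from rfl] at this ⊢

noncomputable def prog (τ : List Card) (n : ℕ) : ℕ → ℕ
  | 0 => 0
  | i + 1 => if (nth τ i).1 = prog τ n i + 1
      then extq τ n (i + 1) ((nth τ i).1) else prog τ n i

lemma prog_succ_play {τ : List Card} {n i : ℕ} (h : (nth τ i).1 = prog τ n i + 1) :
    prog τ n (i + 1) = extq τ n (i + 1) ((nth τ i).1) := by
  simp only [prog]; rw [if_pos h]

lemma prog_succ_skip {τ : List Card} {n i : ℕ} (h : (nth τ i).1 ≠ prog τ n i + 1) :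
    prog τ n (i + 1) = prog τ n i := by
  simp only [prog]; rw [if_neg h]

lemma prog_mono {τ : List Card} {n : ℕ} : ∀ {i j : ℕ}, i ≤ j → prog τ n i ≤ prog τ n j := by
  intro i j hij
  induction j with
  | zero => have : i = 0 := by omega
            subst this; exact le_rfl
  | succ k ih =>
      rcases Nat.eq_or_lt_of_le hij with rfl | hlt
      · exact le_rfl
      · refine le_trans (ih (by omega)) ?_
        by_cases hc : (nth τ k).1 = prog τ n k + 1
        · rw [prog_succ_play hc]
          have := extq_ge τ n (k + 1) ((nth τ k).1)
          omega
        · rw [prog_succ_skip hc]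

lemma prog_le_n {τ : List Card} {n : ℕ} (hval : ValidDeck τ n 1) :
    ∀ i, prog τ n i ≤ n := by
  intro i
  induction i with
  | zero => exact Nat.zero_le n
  | succ k ih =>
      by_cases hc : (nth τ k).1 = prog τ n k + 1
      · rw [prog_succ_play hc]
        have hk : k < τ.length := lt_length_of_val_pos (by omega)
        exact extq_le _ (val_le hval hk).2
      · rwa [prog_succ_skip hc]

lemma occ_of_mem {τ : List Card} {a : ℕ}
    (h : (a, 1) ∈ τ) : ∃ j, j < τ.length ∧ (nth τ j).1 = a := by
  obtain ⟨j, hj, hget⟩ := List.getElem_of_mem h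
  exact ⟨j, hj, by rw [nth_lt hj, hget]⟩

lemma futA {τ : List Card} {n : ℕ}
    (hall : ∀ a, 1 ≤ a → a ≤ n → (a, 1) ∈ τ) :
    ∀ i, prog τ n i < n → fut τ (prog τ n i + 1) i := by
  intro i
  induction i with
  | zero =>
      intro h0
      obtain ⟨j, hj, hv⟩ := occ_of_mem (hall 1 le_rfl (by unfold prog at h0; omega))
      exact ⟨j, Nat.zero_le _, hj, by unfold prog; rw [hv]⟩
  | succ k ih =>
      intro hlt
      by_cases hc : (nth τ k).1 = prog τ n k + 1
      · rcases extq_spec τ n (k + 1) ((nth τ k).1) with hsp | hsp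
        · rw [prog_succ_play hc] at hlt; omega
        · rwa [prog_succ_play hc]
      · rw [prog_succ_skip hc] at hlt ⊢
        obtain ⟨j, hij, hjl, hjv⟩ := ih hlt
        have : j ≠ k := fun hjk => hc (hjk ▸ hjv)
        exact ⟨j, by omega, hjl, hjv⟩

/-- hand, done, configuration of the greedy strategy after `m` cards with progress `v` -/
noncomputable def gH (τ : List Card) (m v : ℕ) : Finset ℕ :=
  (Finset.range m).filter (fun j => v < (nth τ j).1 ∧ lastc τ j)

def gX (τ : List Card) (n j : ℕ) : Prop :=
  (nth τ j).1 = prog τ n j + 1 ∨ (prog τ n j + 1 < (nth τ j).1 ∧ lastc τ j)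

noncomputable def gD (τ : List Card) (n m v : ℕ) : Finset ℕ :=
  (Finset.range m).filter (fun j => (nth τ j).1 ≤ v ∧ gX τ n j)

def gpl (v : ℕ) : ℕ → ℕ := fun k => if k = 1 then v else 0

noncomputable def gC (τ : List Card) (n m v : ℕ) : Config :=
  ⟨gpl v, gH τ m v, gD τ n m v⟩

noncomputable def lpos (τ : List Card) (w : ℕ) : ℕ :=
  Nat.findGreatest (fun j => (nth τ j).1 = w) τ.length

lemma lpos_spec {τ : List Card} {w : ℕ} (hw : 1 ≤ w)
    (hex : ∃ j, j < τ.length ∧ (nth τ j).1 = w) :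
    (nth τ (lpos τ w)).1 = w ∧ lpos τ w < τ.length ∧ lastc τ (lpos τ w) ∧
      ∀ j, (nth τ j).1 = w → j ≤ lpos τ w := by
  obtain ⟨j0, hj0, hv0⟩ := hex
  have hspec : (nth τ (lpos τ w)).1 = w :=
    Nat.findGreatest_spec (P := fun j => (nth τ j).1 = w) (le_of_lt hj0) hv0
  have hlen : lpos τ w < τ.length := lt_length_of_val_pos (by omega)
  have hgr : ∀ j, (nth τ j).1 = w → j ≤ lpos τ w := by
    intro j hjv
    by_contra hc
    have hjl : j < τ.length := lt_length_of_val_pos (by omega)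
    exact Nat.findGreatest_is_greatest (P := fun j => (nth τ j).1 = w)
      (by unfold lpos at hc; omega) (le_of_lt hjl) hjv
  refine ⟨hspec, hlen, ?_, hgr⟩
  rintro ⟨j, hj1, hj2, hjv⟩
  rw [hspec] at hjv
  have := hgr j hjv
  omega

section Greedy

variable {τ : List Card} {n h : ℕ}
  (hval : ValidDeck τ n 1)
  (hnone : ∀ i < τ.length, ¬ Useless τ h n i)
  (hall : ∀ a, 1 ≤ a → a ≤ n → (a, 1) ∈ τ)

include hval hnone hall in
lemma no_overflow {i : ℕ} (hi : i < τ.length)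
    (hstore : prog τ n i + 1 < (nth τ i).1) (hlast : lastc τ i) :
    (insert i (gH τ i (prog τ n i))).card ≤ h := by
  set p := prog τ n i with hp
  set a := (nth τ i).1 with ha
  have han : a ≤ n := (val_le hval hi).2
  have hpn : p < n := by omega
  by_contra hc
  push_neg at hc
  set S := insert i (gH τ i p) with hS
  have hSfact : ∀ x ∈ S, x ≤ i ∧ p + 1 < (nth τ x).1 ∧ lastc τ x ∧ x < τ.length := by
    intro x hx
    rcases Finset.mem_insert.1 hx with rfl | hx'
    · exact ⟨le_rfl, hstore, hlast, hi⟩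
    · simp only [gH, Finset.mem_filter, Finset.mem_range] at hx'
      obtain ⟨hxr, hvx, hlx⟩ := hx'
      have hxlen : x < τ.length := lt_length_of_val_pos (by omega)
      refine ⟨by omega, ?_, hlx, hxlen⟩
      rcases Nat.lt_or_ge (p + 1) ((nth τ x).1) with hgt | hle
      · exact hgt
      · exfalso
        have hvxe : (nth τ x).1 = p + 1 := by omega
        obtain ⟨j0, hij0, hj0l, hj0v⟩ := futA hall i hpn
        exact hlx ⟨j0, by omega, hj0l, by rw [hvxe]; exact hj0v⟩
  obtain ⟨j0, hij0, hj0l, hj0v⟩ := futA hall i hpn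
  have hj0i : i < j0 := by
    rcases Nat.eq_or_lt_of_le hij0 with rfl | hlt
    · omega
    · exact hlt
  obtain ⟨S', hS'sub, hS'card⟩ := Finset.exists_subset_card_eq (le_trans (by omega) (le_of_eq rfl) : h + 1 ≤ S.card)
  set W := S'.image (fun x => (nth τ x).1) with hW
  have hWcard : W.card = h + 1 := by
    rw [hW, Finset.card_image_of_injOn, hS'card]
    intro x hx y hy hxy
    have hx' := hSfact x (hS'sub hx)
    have hy' := hSfact y (hS'sub hy)
    exact lastc_unique hxy hx'.2.2.1 hy'.2.2.1 hx'.2.2.2 hy'.2.2.2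
  refine hnone j0 hj0l ⟨W, hWcard, ?_, ?_⟩
  · intro x hxW
    obtain ⟨y, hyS', rfl⟩ := Finset.mem_image.1 hxW
    have hy' := hSfact y (hS'sub hyS')
    rw [hj0v]
    exact ⟨by omega, (val_le hval hy'.2.2.2).2⟩
  · intro j hj0j hjl hjW
    obtain ⟨y, hyS', hyv⟩ := Finset.mem_image.1 hjW
    have hy' := hSfact y (hS'sub hyS')
    exact hy'.2.2.1 ⟨j, by omega, hjl, hyv.symm⟩

include hval hall in
lemma greedy_chain {i : ℕ} (hi : i < τ.length)
    (hplaynow : (nth τ i).1 = prog τ n i + 1) :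
    ∀ m v, (nth τ i).1 ≤ v → v ≤ extq τ n (i + 1) ((nth τ i).1) →
      extq τ n (i + 1) ((nth τ i).1) - v = m →
      PlayFromHand τ (gC τ n (i + 1) v) (gC τ n (i + 1) (extq τ n (i + 1) ((nth τ i).1))) := by
  set a := (nth τ i).1 with ha
  set q := extq τ n (i + 1) a with hq
  have han : a ≤ n := (val_le hval hi).2
  intro m
  induction m with
  | zero =>
      intro v hav hvq hm
      have : v = q := by omega
      subst this
      exact PlayFromHand.refl _
  | succ m ih =>
      intro v hav hvq hm
      have hvltq : v < q := by omega
      set w := v + 1 with hwdef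
      have havw : a < w := by omega
      have hwq : w ≤ q := by omega
      obtain ⟨hnofut, hwn⟩ := extq_avoid havw hwq
      obtain ⟨hjv, hjlen, hjlast, hjgr⟩ :=
        lpos_spec (τ := τ) (w := w) (by omega) (occ_of_mem (hall w (by omega) hwn))
      set j := lpos τ w with hj
      have hji : j ≤ i := by
        by_contra hc
        exact hnofut ⟨j, by omega, hjlen, hjv⟩
      have hcol : (nth τ j).2 = 1 := color_one hval hjlen
      refine PlayFromHand.play _ _ j ?_ ?_ ?_
      · simp only [gC, gH, Finset.mem_filter, Finset.mem_range]
        exact ⟨by omega, by rw [hjv]; omega, hjlast⟩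
      · show gpl v (nth τ j).2 + 1 = (nth τ j).1
        rw [hcol, hjv]
        simp [gpl]; omega
      · have hcfg : (⟨Function.update (gC τ n (i + 1) v).played (nth τ j).2 (nth τ j).1,
            (gC τ n (i + 1) v).hand.erase j, insert j (gC τ n (i + 1) v).done⟩ : Config) =
            gC τ n (i + 1) w := by
          unfold gC
          simp only [Config.mk.injEq]
          refine ⟨?_, ?_, ?_⟩
          · funext k
            rw [hcol, hjv]
            by_cases hk : k = 1
            · subst hk; simp [gpl]
            · rw [Function.update_of_ne hk]
              simp [gpl, hk]
          · ext x
            simp only [Finset.mem_erase, gH, Finset.mem_filter, Finset.mem_range]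
            constructor
            · rintro ⟨hxj, hxr, hvx, hlx⟩
              refine ⟨hxr, ?_, hlx⟩
              rcases Nat.lt_or_ge w ((nth τ x).1) with hgt | hle
              · exact hgt
              · exfalso
                have hxv : (nth τ x).1 = w := by omega
                have hxlen : x < τ.length := lt_length_of_val_pos (by omega)
                exact hxj (lastc_unique (by rw [hxv, hjv]) hlx hjlast hxlen hjlen)
            · rintro ⟨hxr, hvx, hlx⟩
              refine ⟨?_, hxr, by omega, hlx⟩
              intro hxj
              subst hxj
              rw [hjv] at hvx
              omega
          · ext x
            simp only [Finset.mem_insert, gD, Finset.mem_filter, Finset.mem_range]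
            constructor
            · rintro (rfl | ⟨hxr, hvx, hXx⟩)
              · refine ⟨by omega, by rw [hjv], ?_⟩
                right
                have hpj : prog τ n j ≤ prog τ n i := prog_mono hji
                exact ⟨by rw [hjv]; omega, hjlast⟩
              · exact ⟨hxr, by omega, hXx⟩
            · rintro ⟨hxr, hvx, hXx⟩
              rcases Nat.lt_or_ge v ((nth τ x).1) with hgt | hle
              · -- value is exactly w, must be j
                have hxv : (nth τ x).1 = w := by omega
                left
                have hxlen : x < τ.length := lt_length_of_val_pos (by omega)
                rcases hXx with hX1 | hX2
                · exfalso
                  have hpx : prog τ n x ≤ prog τ n i := prog_mono (by omega)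
                  rw [hxv] at hX1
                  omega
                · exact lastc_unique (by rw [hxv, hjv]) hX2.2 hjlast hxlen hjlen
              · right; exact ⟨hxr, hle, hXx⟩
        rw [hcfg]
        exact ih w (by omega) hwq (by omega)

include hval hnone hall in
lemma greedy_step {i : ℕ} (hi : i < τ.length) :
    Step τ h i (gC τ n i (prog τ n i)) (gC τ n (i + 1) (prog τ n (i + 1))) := by
  set p := prog τ n i with hp
  set a := (nth τ i).1 with ha
  have hcol : (nth τ i).2 = 1 := color_one hval hi
  have hvali := val_le hval hi
  by_cases hplay : a = p + 1
  · -- play immediately, then chain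
    set q := extq τ n (i + 1) a with hq
    have hprogq : prog τ n (i + 1) = q := prog_succ_play hplay
    refine Step.playNow _ _ ?_ ?_
    · show gpl p (nth τ i).2 + 1 = a
      rw [hcol]; simp [gpl]; omega
    · have hcfg : (⟨Function.update (gC τ n i p).played (nth τ i).2 (nth τ i).1,
          (gC τ n i p).hand, insert i (gC τ n i p).done⟩ : Config) = gC τ n (i + 1) a := by
        unfold gC
        simp only [Config.mk.injEq]
        refine ⟨?_, ?_, ?_⟩
        · funext k
          rw [hcol, ← ha]
          by_cases hk : k = 1
          · subst hk; simp [gpl]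
          · rw [Function.update_of_ne hk]; simp [gpl, hk]
        · ext x
          simp only [gH, Finset.mem_filter, Finset.mem_range]
          constructor
          · rintro ⟨hxr, hvx, hlx⟩
            refine ⟨by omega, ?_, hlx⟩
            rcases Nat.lt_or_ge a ((nth τ x).1) with hgt | hle
            · exact hgt
            · exfalso
              have hxv : (nth τ x).1 = a := by omega
              exact hlx ⟨i, by omega, hi, by rw [hxv]⟩
          · rintro ⟨hxr, hvx, hlx⟩
            refine ⟨?_, by omega, hlx⟩
            rcases Nat.eq_or_lt_of_le (Nat.lt_succ_iff.1 hxr) with rfl | hlt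
            · rw [← ha] at hvx; omega
            · exact hlt
        · ext x
          simp only [Finset.mem_insert, gD, Finset.mem_filter, Finset.mem_range]
          constructor
          · rintro (rfl | ⟨hxr, hvx, hXx⟩)
            · exact ⟨by omega, by omega, Or.inl (by rw [← ha, ← hp]; exact hplay)⟩
            · exact ⟨by omega, by omega, hXx⟩
          · rintro ⟨hxr, hvx, hXx⟩
            rcases Nat.eq_or_lt_of_le (Nat.lt_succ_iff.1 hxr) with rfl | hlt
            · left; rfl
            · rcases Nat.lt_or_ge p ((nth τ x).1) with hgt | hle
              · -- value = a = p+1, x < i : impossible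
                exfalso
                have hxv : (nth τ x).1 = a := by omega
                have hxlen : x < τ.length := lt_length_of_val_pos (by omega)
                rcases hXx with hX1 | hX2
                · have hq1 : prog τ n (x + 1) = extq τ n (x + 1) ((nth τ x).1) :=
                    prog_succ_play hX1
                  have hq2 : (nth τ x).1 ≤ extq τ n (x + 1) ((nth τ x).1) := extq_ge _ _ _ _
                  have hq3 : prog τ n (x + 1) ≤ prog τ n i := prog_mono (by omega)
                  omega
                · exact hX2.2 ⟨i, by omega, hi, by rw [hxv]⟩
              · right; exact ⟨hlt, hle, hXx⟩
      rw [hcfg, hprogq]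
      exact greedy_chain hval hall hi hplay
        (extq τ n (i + 1) a - a) a le_rfl (extq_ge _ _ _ _) rfl
  · have hprogp : prog τ n (i + 1) = p := prog_succ_skip hplay
    by_cases hstore : p + 1 < a ∧ lastc τ i
    · -- store
      have hcfg : gC τ n (i + 1) (prog τ n (i + 1)) =
          ⟨(gC τ n i p).played, insert i (gC τ n i p).hand, (gC τ n i p).done⟩ := by
        rw [hprogp]
        unfold gC
        simp only [Config.mk.injEq]
        refine ⟨trivial, ?_, ?_⟩
        · ext x
          simp only [Finset.mem_insert, gH, Finset.mem_filter, Finset.mem_range]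
          constructor
          · rintro ⟨hxr, hvx, hlx⟩
            rcases Nat.eq_or_lt_of_le (Nat.lt_succ_iff.1 hxr) with rfl | hlt
            · left; rfl
            · right; exact ⟨hlt, hvx, hlx⟩
          · rintro (rfl | ⟨hxr, hvx, hlx⟩)
            · exact ⟨by omega, by omega, hstore.2⟩
            · exact ⟨by omega, hvx, hlx⟩
        · ext x
          simp only [gD, Finset.mem_filter, Finset.mem_range]
          constructor
          · rintro ⟨hxr, hvx, hXx⟩
            rcases Nat.eq_or_lt_of_le (Nat.lt_succ_iff.1 hxr) with rfl | hlt
            · omega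
            · exact ⟨hlt, hvx, hXx⟩
          · rintro ⟨hxr, hvx, hXx⟩
            exact ⟨by omega, hvx, hXx⟩
      rw [hcfg]
      exact Step.store _ (no_overflow hval hnone hall hi hstore.1 hstore.2)
    · -- discard
      have hcfg : gC τ n (i + 1) (prog τ n (i + 1)) = gC τ n i p := by
        rw [hprogp]
        unfold gC
        simp only [Config.mk.injEq]
        refine ⟨trivial, ?_, ?_⟩
        · ext x
          simp only [gH, Finset.mem_filter, Finset.mem_range]
          constructor
          · rintro ⟨hxr, hvx, hlx⟩
            rcases Nat.eq_or_lt_of_le (Nat.lt_succ_iff.1 hxr) with rfl | hlt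
            · exfalso
              exact hstore ⟨by omega, hlx⟩
            · exact ⟨hlt, hvx, hlx⟩
          · rintro ⟨hxr, hvx, hlx⟩
            exact ⟨by omega, hvx, hlx⟩
        · ext x
          simp only [gD, Finset.mem_filter, Finset.mem_range]
          constructor
          · rintro ⟨hxr, hvx, hXx⟩
            rcases Nat.eq_or_lt_of_le (Nat.lt_succ_iff.1 hxr) with rfl | hlt
            · exfalso
              rcases hXx with hX1 | hX2
              · exact hplay hX1
              · omega
            · exact ⟨hlt, hvx, hXx⟩
          · rintro ⟨hxr, hvx, hXx⟩
            exact ⟨by omega, hvx, hXx⟩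
      rw [hcfg]
      exact Step.discard _
  -- note : in store branch above we used `hnone`

include hval hnone hall in
lemma greedy_winnable : ∃ ps : PlaySeq τ h Config.initial, ps.Winning n 1 := by
  have hinit : gC τ n 0 (prog τ n 0) = Config.initial := by
    unfold gC Config.initial
    simp only [Config.mk.injEq]
    refine ⟨?_, ?_, ?_⟩
    · funext k; simp [gpl, prog]
    · simp [gH]
    · simp [gD]
  refine ⟨⟨fun i => gC τ n i (prog τ n i), hinit, fun i hi => greedy_step hval hnone hall hi⟩, ?_⟩
  intro k hk1 hk2
  have hk : k = 1 := by omega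
  subst hk
  show n ≤ (gC τ n τ.length (prog τ n τ.length)).played 1
  have hfin : ¬ prog τ n τ.length < n := by
    intro hlt
    obtain ⟨j, hj1, hj2, _⟩ := futA hall τ.length hlt
    omega
  show n ≤ gpl (prog τ n τ.length) 1
  simp [gpl]
  omega

end Greedy

/-! ### Assembly -/

lemma pfh_valin {σ : List Card} {c c' : Config} (hp : PlayFromHand σ c c')
    (hv : ValIn σ c) : ValIn σ c' := by
  induction hp with
  | refl => exact hv
  | play cfg cfg' j hj hplay htail ih => exact ih (ValIn.play hplay hv)

lemma step_valin {σ : List Card} {h i : ℕ} {c c' : Config} (hs : Step σ h i c c')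
    (hv : ValIn σ c) : ValIn σ c' := by
  cases hs with
  | discard => exact hv
  | store hsize => intro a h1 h2; exact hv a h1 h2
  | playNow cfg' hplay htail => exact pfh_valin htail (ValIn.play hplay hv)

lemma winnable_vals {σ : List Card} {n h : ℕ}
    (hwin : ∃ ps : PlaySeq σ h Config.initial, ps.Winning n 1) :
    ∀ a, 1 ≤ a → a ≤ n → (a, 1) ∈ σ := by
  obtain ⟨ps, hw⟩ := hwin
  have hv : ∀ i ≤ σ.length, ValIn σ (ps.cfgs i) := by
    refine playseq_ind ps (fun _ c => ValIn σ c) ?_ (fun i hi c c' hs hvc => step_valin hs hvc)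
    intro a h1 h2
    have : (Config.initial.played 1) = 0 := rfl
    omega
  intro a h1 h2
  have hwf := hw 1 le_rfl le_rfl
  exact hv σ.length le_rfl a h1 (by unfold PlaySeq.final at hwf; omega)

end HanabiAux

open HanabiAux in
theorem winning_iff_filtered_contains_all_values
    (n h : ℕ) (σ σs : List Card) (hval : ValidDeck σ n 1)
    (hreach : Relation.ReflTransGen (DeleteUselessStep h n) σ σs)
    (hnone : ∀ i < σs.length, ¬ Useless σs h n i) :
    (∃ ps : PlaySeq σ h Config.initial, ps.Winning n 1) ↔
      (∀ a, 1 ≤ a → a ≤ n → (a, 1) ∈ σs) := by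
  have key : ValidDeck σs n 1 ∧
      ((∃ ps : PlaySeq σ h Config.initial, ps.Winning n 1) ↔
        (∃ ps : PlaySeq σs h Config.initial, ps.Winning n 1)) := by
    clear hnone
    induction hreach with
    | refl => exact ⟨hval, Iff.rfl⟩
    | tail hab hbc ih =>
        obtain ⟨d, hd, hu, rfl⟩ := hbc
        refine ⟨fun cd hcd => ih.1 cd ((List.eraseIdx_sublist _ d).subset hcd), ?_⟩
        exact ih.2.trans ⟨fun hw => winnable_drop ih.1 hd hu hw, fun hw => winnable_lift hd hw⟩
  constructor
  · intro hw
    exact winnable_vals (key.2.1 hw)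
  · intro hcont
    exact key.2.2 (greedy_winnable key.1 hnone hcont)
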